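/- Let Y be a multiset of n points in ℝ^d with (1/n)∑_i y_i y_iᵀ ⪯ (1+ε)I, and let X ⊆ Y with |X| = αn be such that for every direction v, at least (α/2)n points x of X satisfy ⟨x,v⟩² ≥ (α/4)·vᵀΣ*v, where Σ* = E_{x∼X} x xᵀ. Then Σ* ⪯ (8/α²)·(1+ε)·I. -/

import Mathlib

open Matrix Finset

theorem inlier_second_moment_upper_bound {d n : ℕ} (hn : 0 < n)
    (y : Fin n → Fin d → ℝ) (ε α : ℝ) (hε : 0 ≤ ε) (hα : 0 < α) (hα1 : α ≤ 1)
    (X : Finset (Fin n)) (hX : (X.card : ℝ) = α * n)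
    (hiso : ∀ v : Fin d → ℝ, (1 / n : ℝ) * ∑ i, (y i ⬝ᵥ v) ^ 2 ≤ (1 + ε) * (v ⬝ᵥ v))
    (hanti : ∀ v : Fin d → ℝ, (α / 2) * n ≤
      ((X.filter (fun i =>
        (α / 4) * ((X.card : ℝ)⁻¹ * ∑ j ∈ X, (y j ⬝ᵥ v) ^ 2) ≤ (y i ⬝ᵥ v) ^ 2)).card : ℝ)) :
    (((8 / α ^ 2) * (1 + ε)) • (1 : Matrix (Fin d) (Fin d) ℝ) -
      (X.card : ℝ)⁻¹ • ∑ i ∈ X, vecMulVec (y i) (y i)).PosSemidef := by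
  have hn' : (0 : ℝ) < n := by exact_mod_cast hn
  rw [Matrix.posSemidef_iff_dotProduct_mulVec]
  constructor
  · -- Hermitian
    unfold Matrix.IsHermitian
    ext i j
    simp only [Matrix.conjTranspose_apply, Matrix.sub_apply, Matrix.smul_apply,
      Matrix.one_apply, Matrix.sum_apply, Matrix.vecMulVec_apply, star_sub, star_mul',
      RCLike.star_def, starRingEnd_apply, star_trivial, smul_eq_mul]
    rw [show (if j = i then (1:ℝ) else 0) = if i = j then 1 else 0 from by simp [eq_comm]]
    congr 1
    congr 1
    exact Finset.sum_congr rfl fun k _ => mul_comm _ _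
  · intro v
    have star_v : star v = v := by simp
    rw [star_v]
    -- compute the quadratic form
    have hquad : v ⬝ᵥ ((((8 / α ^ 2) * (1 + ε)) • (1 : Matrix (Fin d) (Fin d) ℝ) -
        (X.card : ℝ)⁻¹ • ∑ i ∈ X, vecMulVec (y i) (y i)) *ᵥ v)
        = (8 / α ^ 2) * (1 + ε) * (v ⬝ᵥ v)
          - (X.card : ℝ)⁻¹ * ∑ i ∈ X, (y i ⬝ᵥ v) ^ 2 := by
      have hsum : (∑ i ∈ X, vecMulVec (y i) (y i)) *ᵥ v
          = ∑ i ∈ X, (vecMulVec (y i) (y i) *ᵥ v) := by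
        ext k
        simp only [Matrix.mulVec, dotProduct, Matrix.sum_apply, Finset.sum_apply,
          Finset.sum_mul]
        exact Finset.sum_comm
      have heq : v ⬝ᵥ ((∑ i ∈ X, vecMulVec (y i) (y i)) *ᵥ v)
          = ∑ i ∈ X, (y i ⬝ᵥ v) ^ 2 := by
        rw [hsum]
        simp only [dotProduct, Finset.sum_apply, Finset.mul_sum]
        rw [Finset.sum_comm]
        refine Finset.sum_congr rfl fun i _ => ?_
        rw [pow_two, Finset.sum_mul_sum]
        simp only [Matrix.mulVec, dotProduct, Matrix.vecMulVec_apply, Finset.mul_sum]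
        exact Finset.sum_congr rfl fun k _ => Finset.sum_congr rfl fun l _ => by ring
      rw [Matrix.sub_mulVec, dotProduct_sub, Matrix.smul_mulVec,
        Matrix.one_mulVec, dotProduct_smul, Matrix.smul_mulVec,
        dotProduct_smul, heq, smul_eq_mul, smul_eq_mul]
    rw [hquad]
    set S : ℝ := (X.card : ℝ)⁻¹ * ∑ j ∈ X, (y j ⬝ᵥ v) ^ 2 with hSdef
    have hq0 : ∀ i, 0 ≤ (y i ⬝ᵥ v) ^ 2 := fun i => sq_nonneg _
    have hS0 : 0 ≤ S := by
      apply mul_nonneg (inv_nonneg.2 (Nat.cast_nonneg _))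
      exact Finset.sum_nonneg fun i _ => hq0 i
    have hcard : (0:ℝ) < X.card := by rw [hX]; positivity
    -- sum over X in terms of S
    have hsumX : ∑ j ∈ X, (y j ⬝ᵥ v) ^ 2 = (X.card : ℝ) * S := by
      rw [hSdef, ← mul_assoc, mul_inv_cancel₀ (ne_of_gt hcard), one_mul]
    set F := X.filter (fun i =>
        (α / 4) * ((X.card : ℝ)⁻¹ * ∑ j ∈ X, (y j ⬝ᵥ v) ^ 2) ≤ (y i ⬝ᵥ v) ^ 2) with hFdef
    have hFcard : (α / 2) * n ≤ (F.card : ℝ) := hanti v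
    have hFsum : (F.card : ℝ) * ((α / 4) * S) ≤ ∑ i ∈ F, (y i ⬝ᵥ v) ^ 2 := by
      have h := Finset.card_nsmul_le_sum F (fun i => (y i ⬝ᵥ v) ^ 2) ((α / 4) * S)
        (fun i hi => (Finset.mem_filter.1 hi).2)
      simpa [nsmul_eq_mul] using h
    have hFX : ∑ i ∈ F, (y i ⬝ᵥ v) ^ 2 ≤ ∑ i ∈ X, (y i ⬝ᵥ v) ^ 2 :=
      Finset.sum_le_sum_of_subset_of_nonneg (Finset.filter_subset _ _)
        (fun i _ _ => hq0 i)
    have hXuniv : ∑ i ∈ X, (y i ⬝ᵥ v) ^ 2 ≤ ∑ i, (y i ⬝ᵥ v) ^ 2 :=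
      Finset.sum_le_sum_of_subset_of_nonneg (Finset.subset_univ X)
        (fun i _ _ => hq0 i)
    have hiso' : ∑ i, (y i ⬝ᵥ v) ^ 2 ≤ (n : ℝ) * ((1 + ε) * (v ⬝ᵥ v)) := by
      have := hiso v
      rw [div_mul_eq_mul_div, one_mul] at this
      calc ∑ i, (y i ⬝ᵥ v) ^ 2 = (n:ℝ) * ((∑ i, (y i ⬝ᵥ v) ^ 2) / n) := by
            field_simp
        _ ≤ (n : ℝ) * ((1 + ε) * (v ⬝ᵥ v)) := by
            exact mul_le_mul_of_nonneg_left this (le_of_lt hn')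
    -- combine: (α/2)*n*(α/4)*S ≤ n*(1+ε)*(v⬝v)
    have hmain : (α / 2) * n * ((α / 4) * S) ≤ (n : ℝ) * ((1 + ε) * (v ⬝ᵥ v)) := by
      have h1 : (α / 2) * n * ((α / 4) * S) ≤ (F.card : ℝ) * ((α / 4) * S) := by
        apply mul_le_mul_of_nonneg_right hFcard
        exact mul_nonneg (by linarith) hS0
      linarith
    have hvv : 0 ≤ v ⬝ᵥ v := by
      simp only [dotProduct]
      exact Finset.sum_nonneg fun i _ => mul_self_nonneg _
    -- conclude S ≤ (8/α²)(1+ε)(v⬝v)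
    have hα2 : (0:ℝ) < α ^ 2 := by positivity
    rw [sub_nonneg, div_mul_eq_mul_div, div_mul_eq_mul_div, le_div_iff₀ hα2]
    nlinarith [hmain, hn', hS0, hvv]
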